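/- arXiv:1806.10357 — 2 statements merged into one kernel-verified Lean document; each statement's English description precedes it below -/
import Mathlib

section
/- For every even integer n ≥ 2, under the uniform probability measure on {−1,1}^n, the variance of the half-spectrum energy is bounded: V[∑_{j=0}^{n/2−1} |f_j|²] ≤ 2n² − 2n. -/
open Finset Real

/-- Expectation with respect to the uniform probability measure on `{-1,1}^n`:
`E[g] = 2^{-n} ∑_{x ∈ {-1,1}^n} g(x)`. -/
noncomputable def expect (n : ℕ) (g : (Fin n → ℝ) → ℝ) : ℝ :=
  (∑ x : Fin n → ({-1, 1} : Finset ℝ), g (fun k => (x k : ℝ))) / 2 ^ n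

/-- Variance with respect to the uniform probability measure on `{-1,1}^n`:
`V[g] = E[g²] − E[g]²`. -/
noncomputable def var (n : ℕ) (g : (Fin n → ℝ) → ℝ) : ℝ :=
  expect n (fun x => g x ^ 2) - (expect n g) ^ 2

/-- The squared amplitude of the `j`-th discrete Fourier coefficient:
`|f_j|² = (∑_k x_k cos(2πkj/n))² + (∑_k x_k sin(2πkj/n))²`. -/
noncomputable def absSqDFT (n : ℕ) (j : ℕ) (x : Fin n → ℝ) : ℝ :=
  (∑ k : Fin n, x k * Real.cos (2 * Real.pi * k * j / n)) ^ 2 +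
    (∑ k : Fin n, x k * Real.sin (2 * Real.pi * k * j / n)) ^ 2

lemma sum_pm_pow (e : ℕ) : ∑ a : ({-1,1} : Finset ℝ), (a : ℝ) ^ e = if Even e then 2 else 0 := by
  rw [Finset.sum_coe_sort ({-1,1} : Finset ℝ) (fun r => r ^ e)]
  rw [Finset.sum_insert (by norm_num), Finset.sum_singleton]
  by_cases h : Even e
  · norm_num [h.neg_one_pow, h]
  · simp [(Nat.not_even_iff_odd.mp h).neg_one_pow, h]

lemma pm_expect_monomial (n : ℕ) (e : Fin n → ℕ) :
    _root_.expect n (fun x => ∏ i, x i ^ e i) = if ∀ i, Even (e i) then 1 else 0 := by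
  unfold _root_.expect
  have h1 : ∏ i : Fin n, ∑ a ∈ (Finset.univ : Finset ({-1,1} : Finset ℝ)), ((a:ℝ)) ^ e i
      = ∑ p ∈ Fintype.piFinset (fun _ : Fin n => (Finset.univ : Finset ({-1,1} : Finset ℝ))),
          ∏ i, ((p i : ℝ)) ^ e i := Finset.prod_univ_sum _ _
  rw [Fintype.piFinset_univ] at h1
  rw [← h1]
  have h2 : ∀ i : Fin n, ∑ a ∈ (Finset.univ : Finset ({-1,1} : Finset ℝ)), ((a:ℝ)) ^ e i
      = if Even (e i) then 2 else 0 := fun i => sum_pm_pow (e i)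
  rw [Finset.prod_congr rfl (fun i _ => h2 i)]
  by_cases h : ∀ i, Even (e i)
  · rw [if_pos h, Finset.prod_congr rfl (fun i (_ : i ∈ Finset.univ) => if_pos (h i)), Finset.prod_const]
    simp
  · rw [if_neg h]
    push_neg at h
    obtain ⟨i, hi⟩ := h
    rw [Finset.prod_eq_zero (Finset.mem_univ i) (by simp [hi]), zero_div]

lemma pm_expect_congr (n : ℕ) (g h : (Fin n → ℝ) → ℝ)
    (hgh : ∀ x : Fin n → ({-1,1} : Finset ℝ), g (fun k => (x k : ℝ)) = h (fun k => (x k : ℝ))) :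
    _root_.expect n g = _root_.expect n h := by
  unfold _root_.expect
  rw [Finset.sum_congr rfl (fun x _ => hgh x)]

lemma pm_expect_add (n : ℕ) (g h : (Fin n → ℝ) → ℝ) :
    _root_.expect n (fun x => g x + h x) = _root_.expect n g + _root_.expect n h := by
  unfold _root_.expect
  rw [← add_div, ← Finset.sum_add_distrib]

lemma pm_expect_const (n : ℕ) (c : ℝ) : _root_.expect n (fun _ => c) = c := by
  unfold _root_.expect
  rw [Finset.sum_const]
  have hcard : Fintype.card (Fin n → ({-1,1} : Finset ℝ)) = 2 ^ n := by
    rw [Fintype.card_fun, Fintype.card_fin, Fintype.card_coe]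
    rw [Finset.card_insert_of_notMem (by norm_num), Finset.card_singleton]
  simp only [Finset.card_univ, hcard, nsmul_eq_mul]
  push_cast
  field_simp

lemma pm_expect_mul_const (n : ℕ) (c : ℝ) (g : (Fin n → ℝ) → ℝ) :
    _root_.expect n (fun x => c * g x) = c * _root_.expect n g := by
  unfold _root_.expect
  rw [← Finset.mul_sum, mul_div_assoc]

lemma pm_expect_sum {ι : Type*} (n : ℕ) (s : Finset ι) (F : ι → (Fin n → ℝ) → ℝ) :
    _root_.expect n (fun x => ∑ i ∈ s, F i x) = ∑ i ∈ s, _root_.expect n (F i) := by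
  unfold _root_.expect
  rw [Finset.sum_comm, Finset.sum_div]

lemma prod_pow_single (n : ℕ) (y : Fin n → ℝ) (k : Fin n) :
    ∏ i, y i ^ (if i = k then 1 else 0) = y k := by
  simp [pow_ite, Finset.prod_ite_eq']

lemma pm_expect_pair (n : ℕ) (k l : Fin n) (h : k ≠ l) :
    _root_.expect n (fun y => y k * y l) = 0 := by
  have he : (fun y : Fin n → ℝ => y k * y l)
      = fun y => ∏ i, y i ^ ((if i = k then 1 else 0) + (if i = l then 1 else 0)) := by
    funext y
    simp only [pow_add, Finset.prod_mul_distrib, prod_pow_single]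
  rw [he, pm_expect_monomial]
  rw [if_neg]
  intro hc
  have := hc k
  simp [h, Nat.even_iff] at this

lemma pm_expect_quad (n : ℕ) (k l p q : Fin n) (hkl : k ≠ l) :
    _root_.expect n (fun y => y k * y l * (y p * y q))
      = (if k = p ∧ l = q then (1:ℝ) else 0) + (if k = q ∧ l = p then 1 else 0) := by
  have he : (fun y : Fin n → ℝ => y k * y l * (y p * y q))
      = fun y => ∏ i, y i ^ ((if i = k then 1 else 0) + (if i = l then 1 else 0)
          + ((if i = p then 1 else 0) + (if i = q then 1 else 0))) := by
    funext y
    simp only [pow_add, Finset.prod_mul_distrib, prod_pow_single]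
  rw [he, pm_expect_monomial]
  have hiff : (∀ i, Even ((if i = k then 1 else 0) + (if i = l then 1 else 0)
          + ((if i = p then 1 else 0) + (if i = q then 1 else 0))))
      ↔ ((k = p ∧ l = q) ∨ (k = q ∧ l = p)) := by
    constructor
    · intro hc
      have hk := hc k
      have hl := hc l
      clear hc he
      by_cases hkp : k = p <;> by_cases hkq : k = q <;> by_cases hlp : l = p <;>
        by_cases hlq : l = q <;> simp_all [Nat.even_iff]
    · rintro (⟨rfl, rfl⟩ | ⟨rfl, rfl⟩) i <;>
      · rcases eq_or_ne i k with rfl | hik <;> rcases eq_or_ne i l with rfl | hil <;>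
          simp_all [Nat.even_iff]
  by_cases hc : (k = p ∧ l = q) ∨ (k = q ∧ l = p)
  · rw [if_pos (hiff.mpr hc)]
    rcases hc with ⟨rfl, rfl⟩ | ⟨rfl, rfl⟩
    · rw [if_pos ⟨rfl, rfl⟩, if_neg (fun hh => hkl hh.1)]
      norm_num
    · rw [if_neg (fun hh => hkl hh.1), if_pos ⟨rfl, rfl⟩]
      norm_num
  · rw [if_neg (fun hh => hc (hiff.mp hh))]
    push_neg at hc
    rw [if_neg, if_neg]
    · norm_num
    · intro hh; exact hc.2 hh.1 hh.2
    · intro hh; exact hc.1 hh.1 hh.2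

lemma ite_expand {α : Type*} [DecidableEq α] (k l p q : α) (hkl : k ≠ l) (ab : ℝ) :
    ab * ((if k = p ∧ l = q then (1:ℝ) else 0) + (if k = q ∧ l = p then 1 else 0))
      = (if l = q then (if k = p then ab else 0) else 0)
        + (if k = q then (if l = p then ab else 0) else 0) := by
  split_ifs <;> simp_all

noncomputable def Amat (n : ℕ) (k l : Fin n) : ℝ :=
  ∑ j ∈ Finset.range (n / 2), Real.cos (2 * Real.pi * ((k : ℝ) - (l : ℝ)) * j / n)

lemma Amat_symm (n : ℕ) (k l : Fin n) : Amat n l k = Amat n k l := by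
  unfold Amat
  refine Finset.sum_congr rfl fun j _ => ?_
  rw [show 2 * Real.pi * ((l : ℝ) - (k : ℝ)) * j / n
      = -(2 * Real.pi * ((k : ℝ) - (l : ℝ)) * j / n) by ring, Real.cos_neg]

lemma abs_Amat_le (n : ℕ) (hn : 2 ≤ n) (heven : Even n) (k l : Fin n) (h : k ≠ l) :
    |Amat n k l| ≤ 1 := by
  obtain ⟨N, hN⟩ := heven
  have hNpos : 0 < N := by omega
  have hn2 : n / 2 = N := by omega
  have hv : (k : ℕ) ≠ (l : ℕ) := fun hh => h (Fin.ext hh)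
  set mz : ℤ := (k : ℤ) - (l : ℤ) with hmz
  have hmz0 : mz ≠ 0 := by simp only [hmz]; omega
  have hmzlt : mz.natAbs < n := by
    have hk := k.isLt; have hl := l.isLt
    simp only [hmz]; omega
  have hmzR : (mz : ℝ) = (k : ℝ) - (l : ℝ) := by push_cast [hmz]; ring
  set θ : ℝ := 2 * Real.pi * (mz : ℝ) / n with hθ
  have hnR : (n : ℝ) ≠ 0 := by positivity
  have hnn : (n : ℝ) = 2 * N := by rw [hN]; push_cast; ring
  have hNR : (N : ℝ) ≠ 0 := by positivity
  have hsin : Real.sin (θ / 2) ≠ 0 := by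
    intro hs
    rw [Real.sin_eq_zero_iff] at hs
    obtain ⟨q, hq⟩ := hs
    have hq2 : (q : ℝ) * Real.pi * n = Real.pi * (mz : ℝ) := by
      rw [hq, hθ]; field_simp
    have h2 : Real.pi * ((q : ℝ) * n) = Real.pi * (mz : ℝ) := by linear_combination hq2
    have h3 : (q : ℝ) * (n : ℝ) = (mz : ℝ) := mul_left_cancel₀ Real.pi_ne_zero h2
    have h4 : q * (n : ℤ) = mz := by exact_mod_cast h3
    have hq0 : q ≠ 0 := by rintro rfl; simp at h4; omega
    have h5 : mz.natAbs = q.natAbs * n := by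
      rw [← h4, Int.natAbs_mul, Int.natAbs_natCast]
    have h6 : 1 ≤ q.natAbs := Nat.one_le_iff_ne_zero.mpr (Int.natAbs_ne_zero.mpr hq0)
    have h7 : 1 * n ≤ q.natAbs * n := Nat.mul_le_mul_right n h6
    omega
  set f : ℕ → ℝ := fun j => Real.sin (j * θ - θ / 2) with hf
  have step : ∀ j ∈ Finset.range N,
      Real.cos (2 * Real.pi * ((k : ℝ) - (l : ℝ)) * j / n) * (2 * Real.sin (θ / 2))
        = f (j + 1) - f j := by
    intro j _
    have harg : 2 * Real.pi * ((k : ℝ) - (l : ℝ)) * j / n = j * θ := by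
      rw [← hmzR, hθ]; ring
    have h1 : ((j + 1 : ℕ) : ℝ) * θ - θ / 2 = j * θ + θ / 2 := by push_cast; ring
    simp only [hf, h1, harg]
    rw [Real.sin_add, Real.sin_sub]
    ring
  have tel : (Amat n k l) * (2 * Real.sin (θ / 2))
      = Real.sin ((N : ℝ) * θ - θ / 2) + Real.sin (θ / 2) := by
    unfold Amat
    rw [hn2, Finset.sum_mul, Finset.sum_congr rfl step, Finset.sum_range_sub f]
    simp only [hf]
    push_cast
    rw [show (0 : ℝ) * θ - θ / 2 = -(θ/2) by ring, Real.sin_neg]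
    ring
  have hNθ : (N : ℝ) * θ = (mz : ℝ) * Real.pi := by
    rw [hθ, hnn]; field_simp
  have hsin0 : Real.sin ((mz : ℝ) * Real.pi) = 0 := Real.sin_eq_zero_iff.mpr ⟨mz, rfl⟩
  have key : (Amat n k l) * 2 * Real.sin (θ / 2)
      = (1 - Real.cos ((mz : ℝ) * Real.pi)) * Real.sin (θ / 2) := by
    rw [show (Amat n k l) * 2 * Real.sin (θ / 2) = (Amat n k l) * (2 * Real.sin (θ / 2)) by ring,
      tel, hNθ, Real.sin_sub, hsin0]
    ring
  have hA : (Amat n k l) * 2 = 1 - Real.cos ((mz : ℝ) * Real.pi) :=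
    mul_right_cancel₀ hsin key
  have hc1 := Real.cos_le_one ((mz : ℝ) * Real.pi)
  have hc2 := Real.neg_one_le_cos ((mz : ℝ) * Real.pi)
  rw [abs_le]
  constructor <;> linarith

lemma rep (n : ℕ) (y : Fin n → ℝ) :
    ∑ j ∈ Finset.range (n / 2), absSqDFT n j y = ∑ k, ∑ l, y k * y l * Amat n k l := by
  have per : ∀ j ∈ Finset.range (n / 2), absSqDFT n j y
      = ∑ k, ∑ l, y k * y l * Real.cos (2 * Real.pi * ((k : ℝ) - (l : ℝ)) * j / n) := by
    intro j _
    unfold absSqDFT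
    rw [sq, sq, Finset.sum_mul_sum, Finset.sum_mul_sum, ← Finset.sum_add_distrib]
    refine Finset.sum_congr rfl fun k _ => ?_
    rw [← Finset.sum_add_distrib]
    refine Finset.sum_congr rfl fun l _ => ?_
    have harg : 2 * Real.pi * ((k : ℝ) - (l : ℝ)) * j / n
        = 2 * Real.pi * (k : ℝ) * j / n - 2 * Real.pi * (l : ℝ) * j / n := by ring
    rw [harg, Real.cos_sub]
    ring
  rw [Finset.sum_congr rfl per, Finset.sum_comm]
  refine Finset.sum_congr rfl fun k _ => ?_
  rw [Finset.sum_comm]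
  refine Finset.sum_congr rfl fun l _ => ?_
  rw [← Finset.mul_sum]
  rfl

/-- For even `n ≥ 2`, the variance of the half-spectrum energy is bounded:
`V[∑_{j=0}^{n/2-1} |f_j|²] ≤ 2n² − 2n`. -/
theorem variance_half_spectrum_energy_le (n : ℕ) (hn : 2 ≤ n) (heven : Even n) :
    var n (fun x => ∑ j ∈ Finset.range (n / 2), absSqDFT n j x) ≤
      2 * (n : ℝ) ^ 2 - 2 * n := by
  set d : Fin n → Fin n → ℝ := fun k l => if k = l then 0 else Amat n k l with hd
  have hdsymm : ∀ k l : Fin n, d l k = d k l := by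
    intro k l
    by_cases hkl : k = l
    · simp [hd, hkl]
    · simp only [hd, if_neg hkl, if_neg (Ne.symm hkl), Amat_symm]
  set c : ℝ := ∑ k, Amat n k k with hc
  set R : (Fin n → ℝ) → ℝ := fun y => ∑ k, ∑ l, d k l * (y k * y l) with hR
  have cube_sq : ∀ (x : Fin n → ({-1,1} : Finset ℝ)) (k : Fin n),
      ((x k : ℝ)) * (x k : ℝ) = 1 := by
    intro x k
    have hmem := (x k).2
    simp only [Finset.mem_insert, Finset.mem_singleton] at hmem
    rcases hmem with h1 | h1 <;> rw [h1] <;> norm_num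
  -- on the cube, the energy equals c + R
  have hG : ∀ x : Fin n → ({-1,1} : Finset ℝ),
      (∑ j ∈ Finset.range (n / 2), absSqDFT n j (fun k => (x k : ℝ)))
        = c + R (fun k => (x k : ℝ)) := by
    intro x
    rw [rep]
    have hterm : ∀ k l : Fin n, (x k : ℝ) * (x l : ℝ) * Amat n k l
        = (if k = l then Amat n k l else 0) + d k l * ((x k : ℝ) * (x l : ℝ)) := by
      intro k l
      by_cases hkl : k = l
      · subst hkl
        rw [if_pos rfl, cube_sq x k]
        simp [hd]
      · rw [if_neg hkl]
        simp only [hd, if_neg hkl]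
        ring
    rw [Finset.sum_congr rfl fun k _ => Finset.sum_congr rfl fun l _ => hterm k l]
    rw [Finset.sum_congr rfl fun k (_ : k ∈ Finset.univ) => Finset.sum_add_distrib,
      Finset.sum_add_distrib]
    congr 1
    refine Finset.sum_congr rfl fun k _ => ?_
    exact Finset.sum_ite_eq Finset.univ k (fun l => Amat n k l) |>.trans (by simp)
  have hER : _root_.expect n R = 0 := by
    have h1 : _root_.expect n R
        = ∑ k, ∑ l, d k l * _root_.expect n (fun y => y k * y l) := by
      rw [hR, pm_expect_sum]
      refine Finset.sum_congr rfl fun k _ => ?_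
      rw [pm_expect_sum]
      exact Finset.sum_congr rfl fun l _ => pm_expect_mul_const n (d k l) _
    rw [h1]
    refine Finset.sum_eq_zero fun k _ => Finset.sum_eq_zero fun l _ => ?_
    by_cases hkl : k = l
    · simp [hd, hkl]
    · rw [pm_expect_pair n k l hkl, mul_zero]
  have hER2 : _root_.expect n (fun y => R y ^ 2) = ∑ k, ∑ l, 2 * (d k l) ^ 2 := by
    have hexp : (fun y : Fin n → ℝ => R y ^ 2)
        = fun y => ∑ k, ∑ l, ∑ p, ∑ q, (d k l * d p q) * (y k * y l * (y p * y q)) := by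
      funext y
      rw [hR, sq, Finset.sum_mul_sum]
      refine Finset.sum_congr rfl fun k _ => ?_
      rw [Finset.sum_congr rfl fun p (_ : p ∈ Finset.univ) => Finset.sum_mul_sum
        Finset.univ Finset.univ (fun l => d k l * (y k * y l)) (fun q => d p q * (y p * y q)),
        Finset.sum_comm]
      refine Finset.sum_congr rfl fun l _ => Finset.sum_congr rfl fun p _ =>
        Finset.sum_congr rfl fun q _ => ?_
      ring
    have h1 : _root_.expect n (fun y => R y ^ 2)
        = ∑ k, ∑ l, ∑ p, ∑ q, (d k l * d p q)
            * _root_.expect n (fun y => y k * y l * (y p * y q)) := by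
      rw [hexp, pm_expect_sum]
      refine Finset.sum_congr rfl fun k _ => ?_
      rw [pm_expect_sum]
      refine Finset.sum_congr rfl fun l _ => ?_
      rw [pm_expect_sum]
      refine Finset.sum_congr rfl fun p _ => ?_
      rw [pm_expect_sum]
      exact Finset.sum_congr rfl fun q _ => pm_expect_mul_const n _ _
    rw [h1]
    refine Finset.sum_congr rfl fun k _ => Finset.sum_congr rfl fun l _ => ?_
    by_cases hkl : k = l
    · subst hkl
      have : ∀ p q : Fin n, (d k k * d p q)
          * _root_.expect n (fun y => y k * y k * (y p * y q)) = 0 := by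
        intro p q
        simp [hd]
      rw [Finset.sum_congr rfl fun p _ => Finset.sum_congr rfl fun q _ => this p q]
      simp [hd]
    · have hstep : ∀ p q : Fin n, (d k l * d p q)
          * _root_.expect n (fun y => y k * y l * (y p * y q))
          = (if l = q then (if k = p then d k l * d p q else 0) else 0)
            + (if k = q then (if l = p then d k l * d p q else 0) else 0) := by
        intro p q
        rw [pm_expect_quad n k l p q hkl]
        exact ite_expand k l p q hkl (d k l * d p q)
      rw [Finset.sum_congr rfl fun p _ => Finset.sum_congr rfl fun q _ => hstep p q]
      simp only [Finset.sum_add_distrib, Finset.sum_ite_eq, Finset.mem_univ, if_true]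
      rw [hdsymm k l]
      ring
  -- compute expectations of the energy and its square
  have hEG : _root_.expect n (fun x => ∑ j ∈ Finset.range (n / 2), absSqDFT n j x) = c := by
    rw [pm_expect_congr n _ (fun y => c + R y) hG, pm_expect_add n (fun _ => c) R,
      pm_expect_const, hER, add_zero]
  have hEG2 : _root_.expect n (fun x => (∑ j ∈ Finset.range (n / 2), absSqDFT n j x) ^ 2)
      = c ^ 2 + _root_.expect n (fun y => R y ^ 2) := by
    have h1 : ∀ x : Fin n → ({-1,1} : Finset ℝ),
        (∑ j ∈ Finset.range (n / 2), absSqDFT n j (fun k => (x k : ℝ))) ^ 2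
          = c ^ 2 + ((2 * c) * R (fun k => (x k : ℝ)) + R (fun k => (x k : ℝ)) ^ 2) := by
      intro x
      rw [hG x]
      ring
    rw [pm_expect_congr n _ (fun y => c ^ 2 + ((2 * c) * R y + R y ^ 2)) h1,
      pm_expect_add n (fun _ => c ^ 2) _, pm_expect_const,
      pm_expect_add n (fun y => (2 * c) * R y) (fun y => R y ^ 2),
      pm_expect_mul_const n (2 * c) R, hER]
    ring
  have hvar : var n (fun x => ∑ j ∈ Finset.range (n / 2), absSqDFT n j x)
      = ∑ k, ∑ l, 2 * (d k l) ^ 2 := by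
    unfold var
    rw [hEG, hEG2, hER2]
    ring
  rw [hvar]
  -- final bound
  have h1 : ∀ k l : Fin n, 2 * (d k l) ^ 2 ≤ 2 * (if k = l then (0:ℝ) else 1) := by
    intro k l
    by_cases hkl : k = l
    · simp [hd, hkl]
    · rw [if_neg hkl]
      have habs := abs_Amat_le n hn heven k l hkl
      have hdq : d k l = Amat n k l := by simp [hd, hkl]
      rw [hdq]
      nlinarith [sq_abs (Amat n k l), abs_nonneg (Amat n k l)]
  calc ∑ k, ∑ l, 2 * (d k l) ^ 2
      ≤ ∑ k : Fin n, ∑ l : Fin n, 2 * (if k = l then (0:ℝ) else 1) :=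
        Finset.sum_le_sum fun k _ => Finset.sum_le_sum fun l _ => h1 k l
    _ = 2 * (n : ℝ) ^ 2 - 2 * n := by
        have h2 : ∀ k : Fin n, ∑ l : Fin n, 2 * (if k = l then (0:ℝ) else 1)
            = 2 * ((n : ℝ) - 1) := by
          intro k
          have h3 : ∀ l : Fin n, 2 * (if k = l then (0:ℝ) else 1)
              = 2 - 2 * (if k = l then (1:ℝ) else 0) := by
            intro l; split_ifs <;> ring
          rw [Finset.sum_congr rfl fun l _ => h3 l, Finset.sum_sub_distrib]
          simp only [Finset.sum_const, Finset.card_univ, Fintype.card_fin, nsmul_eq_mul,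
            ← Finset.mul_sum, Finset.sum_ite_eq, Finset.mem_univ, if_true]
          ring
        rw [Finset.sum_congr rfl fun k _ => h2 k, Finset.sum_const, Finset.card_univ]
        simp only [Fintype.card_fin, nsmul_eq_mul]
        ring
end

section
/- Let m ≥ 2 be an integer and let P be the uniform probability measure on the simplex S = {y ∈ ℝ^m : y_j ≥ 0 for all j, and ∑_{j=0}^{m−1} y_j = 2m²}. For a threshold T with 0 ≤ T² ≤ m², define N₁(y) = #{j ∈ {0, 1, …, m−1} : y_j ≤ T²}. Then the variance of N₁ under P equals m·[(1 − T²/(2m²))^{m−1} − (1 − T²/(2m²))^{2m−2}] + m(m−1)·[(1 − T²/m²)^{m−1} − (1 − T²/(2m²))^{2m−2}]. -/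
open MeasureTheory Finset
open scoped Pointwise ENNReal NNReal

/-- The simplex `S = {y ∈ ℝ^m : y_j ≥ 0 for all j, ∑_j y_j = s}` in Euclidean space. -/
def simplex (m : ℕ) (s : ℝ) : Set (EuclideanSpace ℝ (Fin m)) :=
  {y | (∀ j, 0 ≤ y j) ∧ ∑ j, y j = s}

/-- The uniform probability measure on the simplex: the `(m-1)`-dimensional Hausdorff
measure restricted to the simplex and normalized to total mass 1. -/
noncomputable def simplexUniform (m : ℕ) (s : ℝ) : Measure (EuclideanSpace ℝ (Fin m)) :=
  (μH[(m : ℝ) - 1] (simplex m s))⁻¹ • (μH[(m : ℝ) - 1]).restrict (simplex m s)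

/-- `N₁(y)`: the number of coordinates of `y` that are at most `T²`. -/
noncomputable def None (m : ℕ) (T : ℝ) (y : EuclideanSpace ℝ (Fin m)) : ℝ :=
  ((Finset.univ.filter (fun j : Fin m => y j ≤ T ^ 2)).card : ℝ)

lemma continuous_coord (m : ℕ) (j : Fin m) :
    Continuous (fun y : EuclideanSpace ℝ (Fin m) => y j) := (EuclideanSpace.proj j).continuous

lemma isClosed_simplex (m : ℕ) (s : ℝ) : IsClosed (simplex m s) := by
  have h : simplex m s =
      (⋂ j, {y : EuclideanSpace ℝ (Fin m) | 0 ≤ y j}) ∩ {y | ∑ j, y j = s} := by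
    ext y; simp [simplex, Set.mem_iInter]
  rw [h]
  exact (isClosed_iInter fun j => isClosed_le continuous_const (continuous_coord m j)).inter
    (isClosed_eq (continuous_finset_sum _ fun j _ => continuous_coord m j) continuous_const)

lemma simplex_empty (m : ℕ) {u : ℝ} (hu : u < 0) : simplex m u = ∅ := by
  ext y
  simp only [simplex, Set.mem_setOf_eq, Set.mem_empty_iff_false, iff_false, not_and]
  intro h0 hsum
  have : (0:ℝ) ≤ ∑ j, y j := Finset.sum_nonneg fun j _ => h0 j
  linarith

lemma simplex_zero (m : ℕ) : simplex m 0 = {0} := by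
  ext y
  simp only [simplex, Set.mem_setOf_eq, Set.mem_singleton_iff]
  constructor
  · rintro ⟨h0, hsum⟩
    ext j
    have := (Finset.sum_eq_zero_iff_of_nonneg (fun i _ => h0 i)).1 hsum j (Finset.mem_univ j)
    simpa using this
  · rintro rfl
    exact ⟨fun j => le_refl 0, by simp⟩

lemma smul_simplex (m : ℕ) {c : ℝ} (hc : 0 < c) (s : ℝ) :
    c • simplex m s = simplex m (c * s) := by
  ext y
  constructor
  · rintro ⟨x, ⟨hx0, hxs⟩, rfl⟩
    refine ⟨fun j => mul_nonneg hc.le (hx0 j), ?_⟩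
    have : ∀ j, (c • x) j = c * x j := fun j => rfl
    simp only [this, ← Finset.mul_sum, hxs]
  · rintro ⟨hy0, hys⟩
    refine ⟨c⁻¹ • y, ⟨fun j => mul_nonneg (by positivity) (hy0 j), ?_⟩, ?_⟩
    · have : ∀ j, (c⁻¹ • y) j = c⁻¹ * y j := fun j => rfl
      simp only [this, ← Finset.mul_sum, hys]
      field_simp
    · simp [smul_smul, mul_inv_cancel₀ hc.ne']

lemma measure_simplex_smul (n : ℕ) (hn : 1 ≤ n) {s : ℝ} (hs : 0 < s) (c : ℝ) :
    μH[(n:ℝ)] (simplex (n+1) (c * s)) = ENNReal.ofReal c ^ n * μH[(n:ℝ)] (simplex (n+1) s) := by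
  have hd : (0:ℝ) < (n:ℝ) := by exact_mod_cast hn
  rcases lt_trichotomy c 0 with hc | rfl | hc
  · rw [simplex_empty _ (by nlinarith), measure_empty,
      ENNReal.ofReal_eq_zero.2 hc.le, zero_pow (by omega), zero_mul]
  · have : NullSingletonClass (μH[(n:ℝ)] : Measure (EuclideanSpace ℝ (Fin (n+1)))) := Measure.noAtoms_hausdorff (EuclideanSpace ℝ (Fin (n+1))) hd
    rw [zero_mul, simplex_zero, measure_singleton,
      ENNReal.ofReal_zero, zero_pow (by omega), zero_mul]
  · rw [← smul_simplex _ hc, Measure.hausdorffMeasure_smul₀ hd.le hc.ne' _,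
      ENNReal.smul_def, smul_eq_mul, ENNReal.coe_rpow_of_nonneg _ hd.le]
    congr 1
    rw [ENNReal.rpow_natCast]
    congr 1
    rw [← enorm_eq_nnnorm, ← ofReal_norm, Real.norm_of_nonneg hc.le]

lemma simplex_inter_eq_vadd (m : ℕ) (s : ℝ) (F : Finset (Fin m)) {t : ℝ} (ht : 0 ≤ t) :
    {y ∈ simplex m s | ∀ i ∈ F, t ≤ y i} =
      (WithLp.toLp 2 (fun k => if k ∈ F then t else 0)) +ᵥ
        simplex m (s - F.card * t) := by
  have hv : ∑ k, (if k ∈ F then t else 0 : ℝ) = F.card * t := by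
    rw [Finset.sum_ite_mem, Finset.univ_inter, Finset.sum_const, nsmul_eq_mul]
  ext y
  simp only [Set.mem_sep_iff, Set.mem_vadd_set, simplex, Set.mem_setOf_eq]
  constructor
  · rintro ⟨⟨h0, hsum⟩, hF⟩
    refine ⟨WithLp.toLp 2 (fun k => y k - if k ∈ F then t else 0), ⟨fun k => ?_, ?_⟩, ?_⟩
    · by_cases hk : k ∈ F
      · simpa [hk, sub_nonneg] using hF k hk
      · simpa [hk] using h0 k
    · show ∑ k, (y k - if k ∈ F then t else 0) = s - F.card * t
      rw [Finset.sum_sub_distrib, hsum, hv]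
    · ext k
      show (if k ∈ F then t else 0) + (y k - if k ∈ F then t else 0) = y k
      ring
  · rintro ⟨z, ⟨h0, hsum⟩, rfl⟩
    have happ : ∀ k, ((WithLp.toLp 2 (fun k => if k ∈ F then t else 0)) +ᵥ z) k
        = (if k ∈ F then t else 0) + z k := fun k => rfl
    refine ⟨⟨fun k => ?_, ?_⟩, fun i hi => ?_⟩
    · rw [happ k]
      by_cases hk : k ∈ F
      · rw [if_pos hk]; exact add_nonneg ht (h0 k)
      · rw [if_neg hk, zero_add]; exact h0 k
    · simp only [happ, Finset.sum_add_distrib, hv, hsum]; ring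
    · rw [happ i, if_pos hi]
      have := h0 i
      linarith

lemma measure_simplex_inter (n : ℕ) (hn : 1 ≤ n) {s : ℝ} (hs : 0 < s)
    (F : Finset (Fin (n+1))) {t : ℝ} (ht : 0 ≤ t) :
    μH[(n:ℝ)] {y ∈ simplex (n+1) s | ∀ i ∈ F, t ≤ y i} =
      ENNReal.ofReal (1 - F.card * t / s) ^ n * μH[(n:ℝ)] (simplex (n+1) s) := by
  have hd : (0:ℝ) < (n:ℝ) := by exact_mod_cast hn
  rw [simplex_inter_eq_vadd _ _ _ ht, hausdorffMeasure_vadd _ (Or.inl hd.le) _,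
    show s - (F.card : ℝ) * t = (1 - F.card * t / s) * s by field_simp,
    measure_simplex_smul n hn hs _]

lemma hausdorff_pi_n (n : ℕ) : (μH[(n:ℝ)] : Measure (Fin n → ℝ)) = volume := by
  have h := hausdorffMeasure_pi_real (ι := Fin n)
  rwa [Fintype.card_fin] at h

lemma measure_simplex_pos (n : ℕ) {s : ℝ} (hs : 0 < s) :
    0 < μH[(n:ℝ)] (simplex (n+1) s) := by
  set f : EuclideanSpace ℝ (Fin (n+1)) → (Fin n → ℝ) :=
    (fun x : Fin (n+1) → ℝ => fun i : Fin n => x (Fin.castSucc i)) ∘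
      (WithLp.equiv 2 (Fin (n+1) → ℝ)) with hf
  have h1 : LipschitzWith 1 (fun x : Fin (n+1) → ℝ => fun i : Fin n => x (Fin.castSucc i)) := by
    apply LipschitzWith.of_dist_le_mul
    intro x y
    rw [NNReal.coe_one, one_mul]
    refine dist_pi_le_iff dist_nonneg |>.2 fun i => dist_le_pi_dist x y _
  have hlip : LipschitzWith 1 f := by
    simpa using (h1.comp (PiLp.lipschitzWith_ofLp 2 (fun _ : Fin (n+1) => ℝ)) : LipschitzWith (1 * 1) f)
  have hbox : (Set.univ.pi fun _ : Fin n => Set.Icc (0:ℝ) (s/(n+1))) ⊆ f '' simplex (n+1) s := by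
    intro x hx
    simp only [Set.mem_pi, Set.mem_univ, forall_true_left, Set.mem_Icc] at hx
    have hsumle : ∑ i, x i ≤ n * (s/(n+1)) := by
      calc ∑ i, x i ≤ (Finset.univ.card : ℕ) • (s/(n+1)) :=
        Finset.sum_le_card_nsmul _ _ _ (fun i _ => (hx i).2)
      _ = n * (s/(n+1)) := by simp [nsmul_eq_mul]
    have hfrac : (n:ℝ) * (s/(n+1)) ≤ s := by
      have h0 : (0:ℝ) < (n:ℝ)+1 := by positivity
      calc (n:ℝ) * (s/(n+1)) ≤ ((n:ℝ)+1) * (s/(n+1)) := by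
            have hdiv : 0 ≤ s/((n:ℝ)+1) := by positivity
            nlinarith
        _ = s := by field_simp
    refine ⟨(WithLp.equiv 2 (Fin (n+1) → ℝ)).symm (Fin.snoc x (s - ∑ i, x i)), ⟨?_, ?_⟩, ?_⟩
    · intro j
      refine Fin.lastCases ?_ (fun i => ?_) j
      · show (0:ℝ) ≤ (WithLp.equiv 2 (Fin (n+1) → ℝ)).symm
          (Fin.snoc x (s - ∑ i, x i)) (Fin.last n)
        rw [WithLp.equiv_symm_apply, PiLp.toLp_apply, Fin.snoc_last]
        linarith
      · show (0:ℝ) ≤ (WithLp.equiv 2 (Fin (n+1) → ℝ)).symm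
          (Fin.snoc x (s - ∑ i', x i')) (Fin.castSucc i)
        rw [WithLp.equiv_symm_apply, PiLp.toLp_apply, Fin.snoc_castSucc]
        exact (hx i).1
    · show ∑ j, (WithLp.equiv 2 (Fin (n+1) → ℝ)).symm (Fin.snoc x (s - ∑ i, x i)) j = s
      simp only [WithLp.equiv_symm_apply, PiLp.toLp_apply]
      rw [Fin.sum_univ_castSucc]
      simp only [Fin.snoc_castSucc, Fin.snoc_last]
      ring
    · funext i
      show (Fin.snoc x (s - ∑ i', x i') : Fin (n+1) → ℝ) (Fin.castSucc i) = x i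
      rw [Fin.snoc_castSucc]
  have hvol : 0 < volume (Set.univ.pi fun _ : Fin n => Set.Icc (0:ℝ) (s/(n+1))) := by
    rw [volume_pi_pi]
    simp only [Real.volume_Icc, sub_zero, Finset.prod_const, Finset.card_univ, Fintype.card_fin]
    exact ENNReal.pow_pos (ENNReal.ofReal_pos.2 (by positivity)) n
  have h1 : 0 < μH[(n:ℝ)] (f '' simplex (n+1) s) := by
    rw [hausdorff_pi_n n]
    exact lt_of_lt_of_le hvol (measure_mono hbox)
  have h2 := hlip.hausdorffMeasure_image_le (by positivity : (0:ℝ) ≤ n) (simplex (n+1) s)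
  simp only [ENNReal.coe_one, ENNReal.one_rpow, one_mul] at h2
  exact lt_of_lt_of_le h1 h2

lemma measure_simplex_lt_top (n : ℕ) {s : ℝ} (hs : 0 < s) :
    μH[(n:ℝ)] (simplex (n+1) s) < ⊤ := by
  have hd : (0:ℝ) ≤ (n:ℝ) := by positivity
  set e := WithLp.equiv 2 (Fin (n+1) → ℝ) with he
  have hanti := PiLp.antilipschitzWith_ofLp 2 (fun _ : Fin (n+1) => ℝ)
  have h1 := hanti.le_hausdorffMeasure_image hd (simplex (n+1) s)
  set ψ : (Fin n → ℝ) → (Fin (n+1) → ℝ) := fun x => Fin.snoc x (s - ∑ i, x i) with hψ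
  have hψlip : LipschitzWith ((n:ℝ≥0)+1) ψ := by
    apply LipschitzWith.of_dist_le_mul
    intro x y
    have hnn : (0:ℝ) ≤ ((n:ℝ)+1) * dist x y := by positivity
    have hcoe : ((((n:ℝ≥0)+1) : ℝ≥0) : ℝ) = (n:ℝ)+1 := by push_cast; ring
    rw [hcoe]
    refine dist_pi_le_iff hnn |>.2 fun j => ?_
    refine Fin.lastCases ?_ (fun i => ?_) j
    · simp only [hψ, Fin.snoc_last]
      rw [Real.dist_eq]
      have heq : (s - ∑ i, x i) - (s - ∑ i, y i) = ∑ i, (y i - x i) := by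
        rw [Finset.sum_sub_distrib]; ring
      rw [heq]
      have hdn : (0:ℝ) ≤ dist x y := dist_nonneg
      calc |∑ i, (y i - x i)| ≤ ∑ i, |y i - x i| := Finset.abs_sum_le_sum_abs _ _
        _ ≤ ∑ _i : Fin n, dist x y := Finset.sum_le_sum fun i _ => by
            rw [← Real.dist_eq, dist_comm]; exact dist_le_pi_dist x y i
        _ = n * dist x y := by simp [Finset.sum_const, nsmul_eq_mul]
        _ ≤ ((n:ℝ)+1) * dist x y := by nlinarith
    · simp only [hψ, Fin.snoc_castSucc]
      have hdn : (0:ℝ) ≤ dist x y := dist_nonneg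
      calc dist (x i) (y i) ≤ dist x y := dist_le_pi_dist x y i
        _ ≤ ((n:ℝ)+1) * dist x y := by nlinarith
  have himg : e '' simplex (n+1) s ⊆ ψ '' (Set.univ.pi fun _ : Fin n => Set.Icc (0:ℝ) s) := by
    rintro _ ⟨y, ⟨h0, hsum⟩, rfl⟩
    have hyle : ∀ k, y k ≤ s := fun k => by
      rw [← hsum]
      exact Finset.single_le_sum (fun i _ => h0 i) (Finset.mem_univ k)
    refine ⟨fun i => y (Fin.castSucc i), fun i _ => ⟨h0 _, hyle _⟩, ?_⟩
    have hlast : s - ∑ i : Fin n, y (Fin.castSucc i) = y (Fin.last n) := by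
      have := hsum
      rw [Fin.sum_univ_castSucc] at this
      linarith
    funext j
    refine Fin.lastCases ?_ (fun i => ?_) j
    · simp only [hψ, he, Fin.snoc_last, WithLp.equiv_apply]
      exact hlast
    · simp only [hψ, he, Fin.snoc_castSucc, WithLp.equiv_apply]
  have h2 : μH[(n:ℝ)] (e '' simplex (n+1) s) ≤
      (((n:ℝ≥0)+1 : ℝ≥0) : ℝ≥0∞) ^ (n:ℝ) *
        μH[(n:ℝ)] (Set.univ.pi fun _ : Fin n => Set.Icc (0:ℝ) s) :=
    le_trans (measure_mono himg) (hψlip.hausdorffMeasure_image_le hd _)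
  have hbox : μH[(n:ℝ)] (Set.univ.pi fun _ : Fin n => Set.Icc (0:ℝ) s) < ⊤ := by
    rw [hausdorff_pi_n n, volume_pi_pi]
    simp only [Real.volume_Icc, sub_zero, Finset.prod_const, Finset.card_univ, Fintype.card_fin]
    exact ENNReal.pow_lt_top ENNReal.ofReal_lt_top
  have hrpow : ∀ K : ℝ≥0, ((K : ℝ≥0∞) ^ (n:ℝ)) < ⊤ := fun K => by
    rw [ENNReal.rpow_natCast]
    exact ENNReal.pow_lt_top ENNReal.coe_lt_top
  calc μH[(n:ℝ)] (simplex (n+1) s)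
      ≤ _ * μH[(n:ℝ)] (e '' simplex (n+1) s) := h1
    _ < ⊤ := by
        apply ENNReal.mul_lt_top (hrpow _)
        exact lt_of_le_of_lt h2 (ENNReal.mul_lt_top (hrpow _) hbox)

lemma isClosed_slice (m : ℕ) (s : ℝ) (j : Fin m) (t : ℝ) :
    IsClosed {y ∈ simplex m s | y j = t} :=
  (isClosed_simplex m s).inter (isClosed_eq (continuous_coord m j) continuous_const)

lemma slice_smul (m : ℕ) {c : ℝ} (hc : 0 < c) (s : ℝ) (j : Fin m) :
    c • {y ∈ simplex m s | y j = 0} = {y ∈ simplex m (c*s) | y j = 0} := by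
  ext y
  simp only [Set.mem_smul_set, Set.mem_sep_iff, simplex, Set.mem_setOf_eq]
  constructor
  · rintro ⟨x, ⟨⟨h0, hsum⟩, hxj⟩, rfl⟩
    have happ : ∀ k, (c • x) k = c * x k := fun k => rfl
    refine ⟨⟨fun k => mul_nonneg hc.le (h0 k), ?_⟩, ?_⟩
    · simp only [happ, ← Finset.mul_sum, hsum]
    · rw [happ, hxj, mul_zero]
  · rintro ⟨⟨h0, hsum⟩, hyj⟩
    refine ⟨c⁻¹ • y, ⟨⟨fun k => mul_nonneg (by positivity) (h0 k), ?_⟩, ?_⟩, ?_⟩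
    · have happ : ∀ k, (c⁻¹ • y) k = c⁻¹ * y k := fun k => rfl
      simp only [happ, ← Finset.mul_sum, hsum]
      field_simp
    · show c⁻¹ * y j = 0
      rw [hyj, mul_zero]
    · simp [smul_smul, mul_inv_cancel₀ hc.ne']

lemma slice_t_eq (m : ℕ) (s : ℝ) (j : Fin m) {t : ℝ} (ht : 0 ≤ t) :
    {y ∈ simplex m s | y j = t} =
      (WithLp.toLp 2 (fun k => if k = j then t else 0)) +ᵥ
        {z ∈ simplex m (s - t) | z j = 0} := by
  have hv : ∑ k, (if k = j then t else 0 : ℝ) = t := by simp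
  ext y
  simp only [Set.mem_sep_iff, Set.mem_vadd_set, simplex, Set.mem_setOf_eq]
  constructor
  · rintro ⟨⟨h0, hsum⟩, hyj⟩
    refine ⟨WithLp.toLp 2 (fun k => y k - if k = j then t else 0), ⟨⟨fun k => ?_, ?_⟩, ?_⟩, ?_⟩
    · by_cases hk : k = j
      · subst hk; simp [hyj]
      · simpa [hk] using h0 k
    · show ∑ k, (y k - if k = j then t else 0) = s - t
      rw [Finset.sum_sub_distrib, hsum, hv]
    · show y j - (if j = j then t else 0) = 0
      simp [hyj]
    · ext k
      show (if k = j then t else 0) + (y k - if k = j then t else 0) = y k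
      ring
  · rintro ⟨z, ⟨⟨h0, hsum⟩, hzj⟩, rfl⟩
    have happ : ∀ k, ((WithLp.toLp 2 (fun k => if k = j then t else 0)) +ᵥ z) k
        = (if k = j then t else 0) + z k := fun k => rfl
    refine ⟨⟨fun k => ?_, ?_⟩, ?_⟩
    · rw [happ k]
      by_cases hk : k = j
      · rw [if_pos hk]; exact add_nonneg ht (h0 k)
      · rw [if_neg hk, zero_add]; exact h0 k
    · simp only [happ, Finset.sum_add_distrib, hv, hsum]; ring
    · rw [happ j, if_pos rfl, hzj, add_zero]

lemma slice_measure (n : ℕ) (hn : 1 ≤ n) {s : ℝ} (hs : 0 < s) (j : Fin (n+1))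
    {t : ℝ} (ht0 : 0 ≤ t) (hts : t < s) :
    μH[(n:ℝ)] {y ∈ simplex (n+1) s | y j = t} =
      ENNReal.ofReal ((s-t)/s) ^ n * μH[(n:ℝ)] {y ∈ simplex (n+1) s | y j = 0} := by
  have hd : (0:ℝ) < (n:ℝ) := by exact_mod_cast hn
  have hc : (0:ℝ) < (s-t)/s := div_pos (by linarith) hs
  have key : {z ∈ simplex (n+1) (s - t) | z j = 0} =
      ((s-t)/s) • {y ∈ simplex (n+1) s | y j = 0} := by
    rw [slice_smul _ hc]
    have : (s-t)/s * s = s - t := by field_simp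
    rw [this]
  rw [slice_t_eq _ _ _ ht0, hausdorffMeasure_vadd _ (Or.inl hd.le) _, key,
    Measure.hausdorffMeasure_smul₀ hd.le hc.ne' _,
    ENNReal.smul_def, smul_eq_mul, ENNReal.coe_rpow_of_nonneg _ hd.le]
  congr 1
  rw [ENNReal.rpow_natCast]
  congr 1
  rw [← enorm_eq_nnnorm, ← ofReal_norm, Real.norm_of_nonneg hc.le]

lemma slice0_null (n : ℕ) (hn : 1 ≤ n) {s : ℝ} (hs : 0 < s) (j : Fin (n+1)) :
    μH[(n:ℝ)] {y ∈ simplex (n+1) s | y j = 0} = 0 := by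
  by_contra h0
  set μ0 := μH[(n:ℝ)] {y ∈ simplex (n+1) s | y j = 0} with hμ0
  set D : ℕ → Set (EuclideanSpace ℝ (Fin (n+1))) :=
    fun k => {y ∈ simplex (n+1) s | y j = s/(k+2)} with hD
  have htk : ∀ k : ℕ, 0 < s/((k:ℝ)+2) := fun k => by positivity
  have htks : ∀ k : ℕ, s/((k:ℝ)+2) ≤ s/2 := fun k => by
    apply div_le_div_of_nonneg_left hs.le (by norm_num)
    · norm_num
  have hmeas : ∀ k, MeasurableSet (D k) := fun k => (isClosed_slice _ _ _ _).measurableSet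
  have hdisj : Pairwise (Function.onFun Disjoint D) := by
    intro a b hab
    simp only [Function.onFun, hD]
    apply Set.disjoint_left.2
    rintro y ⟨_, hya⟩ ⟨_, hyb⟩
    apply hab
    have heq : s/((a:ℝ)+2) = s/((b:ℝ)+2) := by rw [← hya, hyb]
    rw [div_eq_div_iff (by positivity) (by positivity)] at heq
    have h2 := mul_left_cancel₀ hs.ne' heq
    have h3 : (a:ℝ) = (b:ℝ) := by linarith
    exact_mod_cast h3
  have hUnion : μH[(n:ℝ)] (⋃ k, D k) ≠ ⊤ := by
    refine ne_top_of_le_ne_top (measure_simplex_lt_top n hs).ne (measure_mono ?_)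
    exact Set.iUnion_subset fun k y hy => hy.1
  set ε : ℝ≥0∞ := ENNReal.ofReal (1/2) ^ n * μ0 with hε
  have hε0 : 0 < ε := by
    rw [hε]
    refine ENNReal.mul_pos (pow_ne_zero n ?_) h0
    simp only [ne_eq, ENNReal.ofReal_eq_zero, not_le]
    norm_num
  have hDk : ∀ k, ε ≤ μH[(n:ℝ)] (D k) := by
    intro k
    rw [hD]
    rw [slice_measure n hn hs j (htk k).le (lt_of_le_of_lt (htks k) (by linarith))]
    rw [hε, hμ0]
    apply mul_le_mul_left
    apply pow_le_pow_left'
    apply ENNReal.ofReal_le_ofReal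
    rw [div_le_div_iff₀ (by norm_num) hs]
    linarith [htks k]
  have hfin := MeasureTheory.Measure.finite_const_le_meas_of_disjoint_iUnion
    (μH[(n:ℝ)]) hε0 hmeas hdisj hUnion
  have : Set.univ ⊆ {i : ℕ | ε ≤ μH[(n:ℝ)] (D i)} := fun i _ => hDk i
  exact (Set.infinite_univ.mono this) hfin

lemma slice_null (n : ℕ) (hn : 1 ≤ n) {s : ℝ} (hs : 0 < s) (j : Fin (n+1))
    {t : ℝ} (ht0 : 0 ≤ t) (hts : t < s) :
    μH[(n:ℝ)] {y ∈ simplex (n+1) s | y j = t} = 0 := by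
  rcases eq_or_lt_of_le ht0 with rfl | _
  · exact slice0_null n hn hs j
  · rw [slice_measure n hn hs j ht0 hts, slice0_null n hn hs j, mul_zero]

lemma strict_single (n : ℕ) (hn : 1 ≤ n) {s t : ℝ} (hs : 0 < s) (ht0 : 0 ≤ t) (hts : t < s)
    (j : Fin (n+1)) :
    μH[(n:ℝ)] {y ∈ simplex (n+1) s | t < y j} =
      ENNReal.ofReal (1 - t/s) ^ n * μH[(n:ℝ)] (simplex (n+1) s) := by
  have hC := measure_simplex_inter n hn hs {j} ht0
  have hset : {y ∈ simplex (n+1) s | ∀ i ∈ ({j} : Finset (Fin (n+1))), t ≤ y i}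
      = {y ∈ simplex (n+1) s | t ≤ y j} := by
    ext y; simp
  rw [hset] at hC
  simp only [Finset.card_singleton, Nat.cast_one, one_mul] at hC
  refine le_antisymm ?_ ?_
  · rw [← hC]
    exact measure_mono fun y hy => ⟨hy.1, hy.2.le⟩
  · rw [← hC]
    calc μH[(n:ℝ)] {y ∈ simplex (n+1) s | t ≤ y j}
        ≤ μH[(n:ℝ)] ({y ∈ simplex (n+1) s | t < y j} ∪ {y ∈ simplex (n+1) s | y j = t}) := by
          apply measure_mono
          rintro y ⟨hyS, hyt⟩
          rcases lt_or_eq_of_le hyt with h | h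
          · exact Or.inl ⟨hyS, h⟩
          · exact Or.inr ⟨hyS, h.symm⟩
      _ ≤ μH[(n:ℝ)] {y ∈ simplex (n+1) s | t < y j} + μH[(n:ℝ)] {y ∈ simplex (n+1) s | y j = t} :=
          measure_union_le _ _
      _ = μH[(n:ℝ)] {y ∈ simplex (n+1) s | t < y j} := by
          rw [slice_null n hn hs j ht0 hts, add_zero]

lemma strict_pair (n : ℕ) (hn : 1 ≤ n) {s t : ℝ} (hs : 0 < s) (ht0 : 0 ≤ t) (hts : t < s)
    {i j : Fin (n+1)} (hij : i ≠ j) :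
    μH[(n:ℝ)] {y ∈ simplex (n+1) s | t < y i ∧ t < y j} =
      ENNReal.ofReal (1 - 2*t/s) ^ n * μH[(n:ℝ)] (simplex (n+1) s) := by
  have hC := measure_simplex_inter n hn hs {i, j} ht0
  have hset : {y ∈ simplex (n+1) s | ∀ k ∈ ({i, j} : Finset (Fin (n+1))), t ≤ y k}
      = {y ∈ simplex (n+1) s | t ≤ y i ∧ t ≤ y j} := by
    ext y; simp [and_assoc]
  rw [hset] at hC
  rw [Finset.card_insert_of_notMem (by simpa using hij), Finset.card_singleton] at hC
  rw [show (((1:ℕ) + 1 : ℕ) : ℝ) = 2 from by norm_num] at hC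
  refine le_antisymm ?_ ?_
  · rw [← hC]
    exact measure_mono fun y hy => ⟨hy.1, hy.2.1.le, hy.2.2.le⟩
  · rw [← hC]
    calc μH[(n:ℝ)] {y ∈ simplex (n+1) s | t ≤ y i ∧ t ≤ y j}
        ≤ μH[(n:ℝ)] ({y ∈ simplex (n+1) s | t < y i ∧ t < y j}
            ∪ ({y ∈ simplex (n+1) s | y i = t} ∪ {y ∈ simplex (n+1) s | y j = t})) := by
          apply measure_mono
          rintro y ⟨hyS, hyi, hyj⟩
          rcases lt_or_eq_of_le hyi with h1 | h1
          · rcases lt_or_eq_of_le hyj with h2 | h2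
            · exact Or.inl ⟨hyS, h1, h2⟩
            · exact Or.inr (Or.inr ⟨hyS, h2.symm⟩)
          · exact Or.inr (Or.inl ⟨hyS, h1.symm⟩)
      _ ≤ μH[(n:ℝ)] {y ∈ simplex (n+1) s | t < y i ∧ t < y j}
          + (μH[(n:ℝ)] {y ∈ simplex (n+1) s | y i = t}
            + μH[(n:ℝ)] {y ∈ simplex (n+1) s | y j = t}) :=
          le_trans (measure_union_le _ _) (by gcongr; exact measure_union_le _ _)
      _ = μH[(n:ℝ)] {y ∈ simplex (n+1) s | t < y i ∧ t < y j} := by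
          rw [slice_null n hn hs i ht0 hts, slice_null n hn hs j ht0 hts, add_zero, add_zero]

lemma measurableSet_le_coord (m : ℕ) (t : ℝ) (j : Fin m) :
    MeasurableSet {y : EuclideanSpace ℝ (Fin m) | y j ≤ t} :=
  (isClosed_le (continuous_coord m j) continuous_const).measurableSet

lemma measurableSet_lt_coord (m : ℕ) (t : ℝ) (j : Fin m) :
    MeasurableSet {y : EuclideanSpace ℝ (Fin m) | t < y j} :=
  (isOpen_lt continuous_const (continuous_coord m j)).measurableSet

lemma measurableSet_sep_lt (m : ℕ) (s t : ℝ) (j : Fin m) :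
    MeasurableSet {y ∈ simplex m s | t < y j} :=
  (isClosed_simplex m s).measurableSet.inter (measurableSet_lt_coord m t j)

lemma measurableSet_sep_lt2 (m : ℕ) (s t : ℝ) (i j : Fin m) :
    MeasurableSet {y ∈ simplex m s | t < y i ∧ t < y j} := by
  have : {y ∈ simplex m s | t < y i ∧ t < y j}
      = simplex m s ∩ ({y | t < y i} ∩ {y | t < y j}) := by
    ext y
    simp only [Set.mem_setOf_eq, Set.mem_inter_iff, and_assoc]
  rw [this]
  exact (isClosed_simplex m s).measurableSet.inter
    ((measurableSet_lt_coord m t i).inter (measurableSet_lt_coord m t j))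

lemma toReal_strict_single (n : ℕ) (hn : 1 ≤ n) {s t : ℝ} (hs : 0 < s) (ht0 : 0 ≤ t)
    (hts : t < s) (j : Fin (n+1)) :
    (μH[(n:ℝ)] {y ∈ simplex (n+1) s | t < y j}).toReal =
      (1 - t/s) ^ n * (μH[(n:ℝ)] (simplex (n+1) s)).toReal := by
  have h1 : 0 ≤ 1 - t/s := by
    rw [sub_nonneg, div_le_one hs]; exact hts.le
  rw [strict_single n hn hs ht0 hts j, ENNReal.toReal_mul, ENNReal.toReal_pow,
    ENNReal.toReal_ofReal h1]

lemma toReal_strict_pair (n : ℕ) (hn : 1 ≤ n) {s t : ℝ} (hs : 0 < s) (ht0 : 0 ≤ t)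
    (hts : t < s) (h2t : 2*t ≤ s) {i j : Fin (n+1)} (hij : i ≠ j) :
    (μH[(n:ℝ)] {y ∈ simplex (n+1) s | t < y i ∧ t < y j}).toReal =
      (1 - 2*t/s) ^ n * (μH[(n:ℝ)] (simplex (n+1) s)).toReal := by
  have h1 : 0 ≤ 1 - 2*t/s := by
    rw [sub_nonneg, div_le_one hs]; exact h2t
  rw [strict_pair n hn hs ht0 hts hij, ENNReal.toReal_mul, ENNReal.toReal_pow,
    ENNReal.toReal_ofReal h1]

lemma key_single (n : ℕ) (hn : 1 ≤ n) {s t : ℝ} (hs : 0 < s) (ht0 : 0 ≤ t) (hts : t < s)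
    (j : Fin (n+1)) :
    (μH[(n:ℝ)] ({y : EuclideanSpace ℝ (Fin (n+1)) | y j ≤ t} ∩ simplex (n+1) s)).toReal =
      (1 - (1 - t/s) ^ n) * (μH[(n:ℝ)] (simplex (n+1) s)).toReal := by
  have hfin : ∀ X : Set (EuclideanSpace ℝ (Fin (n+1))), X ⊆ simplex (n+1) s →
      μH[(n:ℝ)] X ≠ ⊤ :=
    fun X hX => ne_top_of_le_ne_top (measure_simplex_lt_top n hs).ne (measure_mono hX)
  have hunion : ({y : EuclideanSpace ℝ (Fin (n+1)) | y j ≤ t} ∩ simplex (n+1) s)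
      ∪ {y ∈ simplex (n+1) s | t < y j} = simplex (n+1) s := by
    ext y
    constructor
    · rintro (⟨_, h⟩ | ⟨h, _⟩) <;> exact h
    · intro hy
      rcases le_or_gt (y j) t with h | h
      · exact Or.inl ⟨h, hy⟩
      · exact Or.inr ⟨hy, h⟩
  have hdisj : Disjoint ({y : EuclideanSpace ℝ (Fin (n+1)) | y j ≤ t} ∩ simplex (n+1) s)
      {y ∈ simplex (n+1) s | t < y j} := by
    apply Set.disjoint_left.2
    rintro y ⟨hle, _⟩ ⟨_, hlt⟩
    exact absurd hle (not_le.2 hlt)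
  have hadd := measure_union (μ := μH[(n:ℝ)]) hdisj (measurableSet_sep_lt (n+1) s t j)
  rw [hunion] at hadd
  have h2 := congrArg ENNReal.toReal hadd
  rw [ENNReal.toReal_add (hfin _ Set.inter_subset_right) (hfin _ fun y hy => hy.1),
    toReal_strict_single n hn hs ht0 hts j] at h2
  linarith [h2]

lemma key_pair (n : ℕ) (hn : 1 ≤ n) {s t : ℝ} (hs : 0 < s) (ht0 : 0 ≤ t) (hts : t < s)
    (h2t : 2*t ≤ s) {i j : Fin (n+1)} (hij : i ≠ j) :
    (μH[(n:ℝ)] ({y : EuclideanSpace ℝ (Fin (n+1)) | y i ≤ t} ∩ {y | y j ≤ t}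
        ∩ simplex (n+1) s)).toReal =
      (1 - 2*(1 - t/s) ^ n + (1 - 2*t/s) ^ n) * (μH[(n:ℝ)] (simplex (n+1) s)).toReal := by
  set E := EuclideanSpace ℝ (Fin (n+1))
  set S := simplex (n+1) s with hSdef
  have hfin : ∀ X : Set E, X ⊆ S → μH[(n:ℝ)] X ≠ ⊤ :=
    fun X hX => ne_top_of_le_ne_top (measure_simplex_lt_top n hs).ne (measure_mono hX)
  set P : Set E := {y : E | y i ≤ t} ∩ {y | y j ≤ t} ∩ S with hP
  set Bi : Set E := {y ∈ S | t < y i} with hBi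
  set Bj : Set E := {y ∈ S | t < y j} with hBj
  have hunion : P ∪ (Bi ∪ Bj) = S := by
    ext y
    constructor
    · rintro (⟨_, h⟩ | ⟨h, _⟩ | ⟨h, _⟩) <;> exact h
    · intro hy
      rcases le_or_gt (y i) t with h1 | h1
      · rcases le_or_gt (y j) t with h2 | h2
        · exact Or.inl ⟨⟨h1, h2⟩, hy⟩
        · exact Or.inr (Or.inr ⟨hy, h2⟩)
      · exact Or.inr (Or.inl ⟨hy, h1⟩)
  have hdisj : Disjoint P (Bi ∪ Bj) := by
    apply Set.disjoint_left.2
    rintro y ⟨⟨hi', hj'⟩, _⟩ (⟨_, hlt⟩ | ⟨_, hlt⟩)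
    · exact absurd hi' (not_le.2 hlt)
    · exact absurd hj' (not_le.2 hlt)
  have hadd := measure_union (μ := μH[(n:ℝ)]) hdisj
    ((measurableSet_sep_lt (n+1) s t i).union (measurableSet_sep_lt (n+1) s t j))
  rw [hunion] at hadd
  have hBiBj : Bi ∩ Bj = {y ∈ S | t < y i ∧ t < y j} := by
    ext y
    constructor
    · rintro ⟨⟨hS1, h1⟩, ⟨_, h2⟩⟩; exact ⟨hS1, h1, h2⟩
    · rintro ⟨hS1, h1, h2⟩; exact ⟨⟨hS1, h1⟩, ⟨hS1, h2⟩⟩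
  have hincl := measure_union_add_inter (μ := μH[(n:ℝ)]) Bi (measurableSet_sep_lt (n+1) s t j)
  -- hincl : μ (Bi ∪ Bj) + μ (Bi ∩ Bj) = μ Bi + μ Bj
  have hBiS : Bi ⊆ S := fun y hy => hy.1
  have hBjS : Bj ⊆ S := fun y hy => hy.1
  have hPS : P ⊆ S := fun y hy => hy.2
  have hUS : Bi ∪ Bj ⊆ S := Set.union_subset hBiS hBjS
  have h2 := congrArg ENNReal.toReal hadd
  rw [ENNReal.toReal_add (hfin _ hPS) (hfin _ hUS)] at h2
  have h3 := congrArg ENNReal.toReal hincl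
  rw [ENNReal.toReal_add (hfin _ hUS) (hfin _ fun y hy => (Set.inter_subset_left hy).1),
    ENNReal.toReal_add (hfin _ hBiS) (hfin _ hBjS), hBiBj,
    toReal_strict_pair n hn hs ht0 hts h2t hij] at h3
  rw [hBi] at *
  have hi1 := toReal_strict_single n hn hs ht0 hts i
  have hj1 := toReal_strict_single n hn hs ht0 hts j
  rw [← hBi] at *
  -- combine
  have hVi : (μH[(n:ℝ)] Bi).toReal = (1 - t/s) ^ n * (μH[(n:ℝ)] S).toReal := hi1
  have hVj : (μH[(n:ℝ)] Bj).toReal = (1 - t/s) ^ n * (μH[(n:ℝ)] S).toReal := hj1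
  rw [hVi, hVj] at h3
  linarith [h2, h3]

lemma None_eq_sum (m : ℕ) (T : ℝ) (y : EuclideanSpace ℝ (Fin m)) :
    None m T y = ∑ j : Fin m,
      Set.indicator {x : EuclideanSpace ℝ (Fin m) | x j ≤ T^2} (fun _ => (1:ℝ)) y := by
  unfold None
  rw [Finset.card_filter]
  push_cast
  refine Finset.sum_congr rfl fun j _ => ?_
  rw [Set.indicator_apply]
  by_cases h : y j ≤ T^2 <;> simp [h, Set.mem_setOf_eq]

lemma integral_None (n : ℕ) (hn : 1 ≤ n) (T : ℝ) {s : ℝ} (hs : 0 < s)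
    (ht0 : 0 ≤ T^2) (hts : T^2 < s) :
    ∫ y, None (n+1) T y
        ∂((μH[(n:ℝ)] (simplex (n+1) s))⁻¹ • (μH[(n:ℝ)]).restrict (simplex (n+1) s)) =
      ((n:ℝ)+1) * (1 - (1 - T^2/s) ^ n) := by
  set S := simplex (n+1) s with hS
  have hfinS := measure_simplex_lt_top n hs
  have hposS := measure_simplex_pos n hs
  have hrestr : IsFiniteMeasure ((μH[(n:ℝ)]).restrict S) :=
    ⟨by rw [Measure.restrict_apply_univ]; exact hfinS⟩
  have hV : 0 < (μH[(n:ℝ)] S).toReal := ENNReal.toReal_pos hposS.ne' hfinS.ne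
  simp only [None_eq_sum]
  rw [integral_smul_measure, integral_finset_sum _ (fun j _ =>
    (integrable_const (1:ℝ)).indicator (measurableSet_le_coord (n+1) (T^2) j))]
  have hval : ∀ j : Fin (n+1),
      ∫ y, Set.indicator {x : EuclideanSpace ℝ (Fin (n+1)) | x j ≤ T^2} (fun _ => (1:ℝ)) y
        ∂((μH[(n:ℝ)]).restrict S) = (1 - (1 - T^2/s) ^ n) * (μH[(n:ℝ)] S).toReal := by
    intro j
    rw [integral_indicator_const (1:ℝ) (measurableSet_le_coord (n+1) (T^2) j),
      measureReal_restrict_apply (measurableSet_le_coord (n+1) (T^2) j),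
      smul_eq_mul, mul_one]
    exact key_single n hn hs ht0 hts j
  simp only [hval]
  rw [Finset.sum_const, Finset.card_univ, Fintype.card_fin, smul_eq_mul, ENNReal.toReal_inv]
  push_cast
  field_simp
  ring

lemma integral_None_sq (n : ℕ) (hn : 1 ≤ n) (T : ℝ) {s : ℝ} (hs : 0 < s)
    (ht0 : 0 ≤ T^2) (hts : T^2 < s) (h2t : 2*T^2 ≤ s) :
    ∫ y, (None (n+1) T y)^2
        ∂((μH[(n:ℝ)] (simplex (n+1) s))⁻¹ • (μH[(n:ℝ)]).restrict (simplex (n+1) s)) =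
      ((n:ℝ)+1) * (1 - (1 - T^2/s) ^ n) +
        (((n:ℝ)+1)^2 - ((n:ℝ)+1)) * (1 - 2*(1 - T^2/s) ^ n + (1 - 2*T^2/s) ^ n) := by
  set S := simplex (n+1) s with hS
  have hfinS := measure_simplex_lt_top n hs
  have hposS := measure_simplex_pos n hs
  have hrestr : IsFiniteMeasure ((μH[(n:ℝ)]).restrict S) :=
    ⟨by rw [Measure.restrict_apply_univ]; exact hfinS⟩
  have hV : 0 < (μH[(n:ℝ)] S).toReal := ENNReal.toReal_pos hposS.ne' hfinS.ne
  set A : Fin (n+1) → Set (EuclideanSpace ℝ (Fin (n+1))) :=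
    fun j => {x | x j ≤ T^2} with hA
  have hAmeas : ∀ j, MeasurableSet (A j) := fun j => measurableSet_le_coord (n+1) (T^2) j
  have hsq : ∀ y, (None (n+1) T y)^2 = ∑ p : Fin (n+1) × Fin (n+1),
      Set.indicator (A p.1 ∩ A p.2) (fun _ => (1:ℝ)) y := by
    intro y
    rw [None_eq_sum, sq, Finset.sum_mul_sum, ← Finset.univ_product_univ, Finset.sum_product]
    refine Finset.sum_congr rfl fun i _ => Finset.sum_congr rfl fun j _ => ?_
    rw [← Set.inter_indicator_mul]
    simp [Set.indicator_apply, hA, Set.mem_setOf_eq]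
  simp only [hsq]
  rw [integral_smul_measure, integral_finset_sum _ (fun p _ =>
    (integrable_const (1:ℝ)).indicator ((hAmeas p.1).inter (hAmeas p.2)))]
  have hval : ∀ p : Fin (n+1) × Fin (n+1),
      ∫ y, Set.indicator (A p.1 ∩ A p.2) (fun _ => (1:ℝ)) y ∂((μH[(n:ℝ)]).restrict S) =
        (1 - 2*(1 - T^2/s) ^ n + (1 - 2*T^2/s) ^ n) * (μH[(n:ℝ)] S).toReal +
          (if p.1 = p.2 then
            ((1 - (1 - T^2/s) ^ n) - (1 - 2*(1 - T^2/s) ^ n + (1 - 2*T^2/s) ^ n))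
              * (μH[(n:ℝ)] S).toReal
           else 0) := by
    intro p
    rw [integral_indicator_const (1:ℝ) ((hAmeas p.1).inter (hAmeas p.2)),
      measureReal_restrict_apply ((hAmeas p.1).inter (hAmeas p.2)), smul_eq_mul, mul_one,
      measureReal_def]
    by_cases hp : p.1 = p.2
    · rw [if_pos hp, hp, Set.inter_self]
      rw [key_single n hn hs ht0 hts p.2]
      ring
    · rw [if_neg hp]
      rw [key_pair n hn hs ht0 hts h2t hp]
      ring
  simp only [hval]
  rw [Finset.sum_add_distrib, Finset.sum_const, Finset.card_univ]
  have hdiag : ∑ p : Fin (n+1) × Fin (n+1),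
      (if p.1 = p.2 then
        ((1 - (1 - T^2/s) ^ n) - (1 - 2*(1 - T^2/s) ^ n + (1 - 2*T^2/s) ^ n))
          * (μH[(n:ℝ)] S).toReal
       else 0) =
      ((n:ℝ)+1) * (((1 - (1 - T^2/s) ^ n) - (1 - 2*(1 - T^2/s) ^ n + (1 - 2*T^2/s) ^ n))
        * (μH[(n:ℝ)] S).toReal) := by
    rw [← Finset.univ_product_univ, Finset.sum_product]
    simp only [Finset.sum_ite_eq, Finset.mem_univ, if_true]
    rw [Finset.sum_const, Finset.card_univ, Fintype.card_fin, nsmul_eq_mul]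
    push_cast
    ring
  rw [hdiag, smul_eq_mul, ENNReal.toReal_inv]
  simp only [Fintype.card_prod, Fintype.card_fin]
  push_cast
  field_simp
  ring

/-- On the simplex `{y : y_j ≥ 0, ∑ y_j = 2m²}` with the uniform probability measure,
the variance `E[N₁²] − E[N₁]²` of `N₁(y) = #{j : y_j ≤ T²}` equals
`m·[(1 − T²/(2m²))^{m-1} − (1 − T²/(2m²))^{2m-2}]
  + m(m-1)·[(1 − T²/m²)^{m-1} − (1 − T²/(2m²))^{2m-2}]`. -/
theorem variance_N1_simplex (m : ℕ) (hm : 2 ≤ m) (T : ℝ)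
    (hT0 : 0 ≤ T ^ 2) (hT : T ^ 2 ≤ (m : ℝ) ^ 2) :
    (∫ y, None m T y ^ 2 ∂(simplexUniform m (2 * (m : ℝ) ^ 2))) -
        (∫ y, None m T y ∂(simplexUniform m (2 * (m : ℝ) ^ 2))) ^ 2 =
      (m : ℝ) * ((1 - T ^ 2 / (2 * (m : ℝ) ^ 2)) ^ (m - 1) -
          (1 - T ^ 2 / (2 * (m : ℝ) ^ 2)) ^ (2 * m - 2)) +
        (m : ℝ) * ((m : ℝ) - 1) * ((1 - T ^ 2 / (m : ℝ) ^ 2) ^ (m - 1) -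
          (1 - T ^ 2 / (2 * (m : ℝ) ^ 2)) ^ (2 * m - 2)) := by
  obtain ⟨n, rfl⟩ : ∃ n, m = n + 1 := ⟨m - 1, by omega⟩
  have hn : 1 ≤ n := by omega
  have hm1 : (0:ℝ) < ((n+1:ℕ):ℝ) := by positivity
  have hs : (0:ℝ) < 2 * ((n+1:ℕ):ℝ)^2 := by positivity
  have hts : T^2 < 2 * ((n+1:ℕ):ℝ)^2 := by nlinarith
  have h2t : 2*T^2 ≤ 2 * ((n+1:ℕ):ℝ)^2 := by nlinarith
  have hd : (((n+1:ℕ):ℝ) - 1) = (n:ℝ) := by push_cast; ring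
  have hP : simplexUniform (n+1) (2 * ((n+1:ℕ):ℝ)^2)
      = (μH[(n:ℝ)] (simplex (n+1) (2*((n+1:ℕ):ℝ)^2)))⁻¹ •
          (μH[(n:ℝ)]).restrict (simplex (n+1) (2*((n+1:ℕ):ℝ)^2)) := by
    unfold simplexUniform
    rw [hd]
  rw [hP, integral_None n hn T hs hT0 hts, integral_None_sq n hn T hs hT0 hts h2t]
  have hB : 1 - 2*T^2/(2*((n+1:ℕ):ℝ)^2) = 1 - T^2/((n+1:ℕ):ℝ)^2 := by
    field_simp
  have he1 : n + 1 - 1 = n := by omega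
  have he2 : 2*(n+1) - 2 = 2*n := by omega
  rw [hB, he1, he2]
  have hx : (1 - T^2/(2*((n+1:ℕ):ℝ)^2)) ^ (2*n) = ((1 - T^2/(2*((n+1:ℕ):ℝ)^2)) ^ n)^2 := by
    rw [pow_mul']
  rw [hx]
  push_cast
  ring
end
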